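/- arXiv:1007.4475 — 2 statements merged into one kernel-verified Lean document; each statement's English description precedes it below -/
import Mathlib

section
/- Suppose the group G is finite. Fix i₀ ∈ I and λ₀ ∈ Λ with p := p_{λ₀ i₀} ≠ 𝐨. Then the ℂ-linear map ρ : A → A ⊗[ℂ] A determined on basis vectors by ρ(δ_{(j,g,μ)}) = |G|⁻¹ · Σ_{h∈G} δ_{(j, g h p⁻¹, λ₀)} ⊗ δ_{(i₀, h⁻¹, μ)} is a right inverse of the multiplication map Π : A ⊗[ℂ] A → A (i.e. Π ∘ ρ = id_A) and is an A-bimodule homomorphism: a · ρ(x) = ρ(a * x) and ρ(x) · a = ρ(x * a) for all a, x ∈ A, where the bimodule actions on A ⊗[ℂ] A are a·(u⊗v) = (a*u)⊗v and (u⊗v)·a = u⊗(v*a). In particular, if G is finite then the contracted semigroup algebra ℂ₀[S] is biprojective. -/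
open scoped Classical

/-- The product of two nonzero elements of the Rees semigroup `S(G; I, Λ; P)`,
taking values in `S = WithZero (I × G × Λ)`: the result is
`(i, g * p_{λ j} * h, μ)` if the sandwich entry `p_{λ j}` is nonzero, and `∅ = 0`
otherwise. -/
noncomputable def reesMulAux {G I Λ : Type*} [Group G] (P : Λ → I → WithZero G)
    (s t : I × G × Λ) : WithZero (I × G × Λ) :=
  if h : P s.2.2 t.1 = 0 then 0
  else (((s.1, s.2.1 * WithZero.unzero h * t.2.1, t.2.2) : I × G × Λ) :
    WithZero (I × G × Λ))

/-- The Rees multiplication on `S = (I × G × Λ) ∪ {∅} = WithZero (I × G × Λ)`,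
where the adjoined zero `∅ = 0` is absorbing. -/
noncomputable def reesMul {G I Λ : Type*} [Group G] (P : Λ → I → WithZero G)
    (x y : WithZero (I × G × Λ)) : WithZero (I × G × Λ) :=
  if hx : x = 0 then 0
  else if hy : y = 0 then 0
  else reesMulAux P (WithZero.unzero hx) (WithZero.unzero hy)

/-- The product `δ_s * δ_t` of two basis vectors of the contracted semigroup algebra
`A = ℂ₀[S]`: it is `δ_{s·t}` if `s·t ≠ ∅` in `S`, and `0` if `s·t = ∅`. -/
noncomputable def reesDelta {G I Λ : Type*} [Group G] (P : Λ → I → WithZero G)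
    (s t : I × G × Λ) : (I × G × Λ) →₀ ℂ :=
  if h : P s.2.2 t.1 = 0 then 0
  else Finsupp.single (s.1, s.2.1 * WithZero.unzero h * t.2.1, t.2.2) (1 : ℂ)

/-- The multiplication of the contracted semigroup algebra `A = ℂ₀[S]`, as the
(unique) bilinear map determined on basis vectors by `δ_s * δ_t = δ_{s·t}` if
`s·t ≠ ∅` in `S` and `δ_s * δ_t = 0` if `s·t = ∅`. -/
noncomputable def reesAlgMul {G I Λ : Type*} [Group G] (P : Λ → I → WithZero G) :
    ((I × G × Λ) →₀ ℂ) →ₗ[ℂ] ((I × G × Λ) →₀ ℂ) →ₗ[ℂ] ((I × G × Λ) →₀ ℂ) :=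
  Finsupp.lift (((I × G × Λ) →₀ ℂ) →ₗ[ℂ] ((I × G × Λ) →₀ ℂ)) ℂ (I × G × Λ)
    fun s => Finsupp.lift ((I × G × Λ) →₀ ℂ) ℂ (I × G × Λ) fun t => reesDelta P s t

open TensorProduct

/-- The candidate splitting `ρ : A → A ⊗[ℂ] A` of the multiplication of `A = ℂ₀[S]`
for a finite underlying group `G`, determined on basis vectors by
`ρ(δ_{(j,g,μ)}) = |G|⁻¹ ∑_{h ∈ G} δ_{(j, g h p⁻¹, λ₀)} ⊗ δ_{(i₀, h⁻¹, μ)}`. -/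
noncomputable def reesRho {G I Λ : Type*} [Group G] [Fintype G]
    (P : Λ → I → WithZero G) (i₀ : I) (lam₀ : Λ) (hp : P lam₀ i₀ ≠ 0) :
    ((I × G × Λ) →₀ ℂ) →ₗ[ℂ] (((I × G × Λ) →₀ ℂ) ⊗[ℂ] ((I × G × Λ) →₀ ℂ)) :=
  Finsupp.lift (((I × G × Λ) →₀ ℂ) ⊗[ℂ] ((I × G × Λ) →₀ ℂ)) ℂ (I × G × Λ) fun s =>
    (Fintype.card G : ℂ)⁻¹ •
      ∑ h : G,
        Finsupp.single ((s.1, s.2.1 * h * (WithZero.unzero hp)⁻¹, lam₀) : I × G × Λ) (1 : ℂ)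
          ⊗ₜ[ℂ] Finsupp.single ((i₀, h⁻¹, s.2.2) : I × G × Λ) (1 : ℂ)


section
variable {G I Λ : Type*} [Group G] [Fintype G] (P : Λ → I → WithZero G)

lemma reesAlgMul_single (s t : I × G × Λ) :
    reesAlgMul P (Finsupp.single s (1:ℂ)) (Finsupp.single t 1) = reesDelta P s t := by
  simp [reesAlgMul, Finsupp.lift_apply, Finsupp.sum_single_index]

lemma reesRho_single (i₀ : I) (lam₀ : Λ) (hp : P lam₀ i₀ ≠ 0) (s : I × G × Λ) :
    reesRho P i₀ lam₀ hp (Finsupp.single s (1:ℂ)) =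
      (Fintype.card G : ℂ)⁻¹ •
      ∑ h : G,
        Finsupp.single ((s.1, s.2.1 * h * (WithZero.unzero hp)⁻¹, lam₀) : I × G × Λ) (1 : ℂ)
          ⊗ₜ[ℂ] Finsupp.single ((i₀, h⁻¹, s.2.2) : I × G × Λ) (1 : ℂ) := by
  simp [reesRho, Finsupp.lift_apply, Finsupp.sum_single_index]

end
open TensorProduct in
lemma rees_key1 {G I Λ : Type*} [Group G] [Fintype G] (P : Λ → I → WithZero G)
    (i₀ : I) (lam₀ : Λ) (hp : P lam₀ i₀ ≠ 0) (s : I × G × Λ) :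
    TensorProduct.lift (reesAlgMul P) (reesRho P i₀ lam₀ hp (Finsupp.single s (1:ℂ)))
      = Finsupp.single s 1 := by
  rw [reesRho_single, map_smul, map_sum]
  simp only [TensorProduct.lift.tmul, reesAlgMul_single, reesDelta, hp, dif_neg,
    mul_assoc, inv_mul_cancel_left, mul_inv_cancel, mul_one, dite_false, Prod.mk.eta]
  rw [Finset.sum_const, Finset.card_univ, ← Nat.cast_smul_eq_nsmul ℂ, smul_smul,
    inv_mul_cancel₀ (by exact_mod_cast Fintype.card_ne_zero), one_smul]
open TensorProduct in
lemma rees_key2 {G I Λ : Type*} [Group G] [Fintype G] (P : Λ → I → WithZero G)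
    (i₀ : I) (lam₀ : Λ) (hp : P lam₀ i₀ ≠ 0) (t s : I × G × Λ) :
    TensorProduct.map (reesAlgMul P (Finsupp.single t (1:ℂ))) LinearMap.id
        (reesRho P i₀ lam₀ hp (Finsupp.single s (1:ℂ)))
      = reesRho P i₀ lam₀ hp (reesAlgMul P (Finsupp.single t 1) (Finsupp.single s 1)) := by
  rw [reesAlgMul_single, reesRho_single, map_smul, map_sum]
  by_cases hq : P t.2.2 s.1 = 0
  · simp [reesDelta, hq, reesAlgMul_single]
  · simp only [reesDelta, hq, dif_neg, TensorProduct.map_tmul, reesAlgMul_single,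
      LinearMap.id_coe, id_eq, dite_false]
    rw [reesRho_single]
    simp [mul_assoc]
open TensorProduct in
lemma rees_key3 {G I Λ : Type*} [Group G] [Fintype G] (P : Λ → I → WithZero G)
    (i₀ : I) (lam₀ : Λ) (hp : P lam₀ i₀ ≠ 0) (t s : I × G × Λ) :
    TensorProduct.map LinearMap.id ((reesAlgMul P).flip (Finsupp.single t (1:ℂ)))
        (reesRho P i₀ lam₀ hp (Finsupp.single s (1:ℂ)))
      = reesRho P i₀ lam₀ hp (reesAlgMul P (Finsupp.single s 1) (Finsupp.single t 1)) := by
  rw [reesAlgMul_single, reesRho_single, map_smul, map_sum]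
  by_cases hq : P s.2.2 t.1 = 0
  · simp [reesDelta, hq, reesAlgMul_single]
  · simp only [reesDelta, hq, dif_neg, TensorProduct.map_tmul, reesAlgMul_single,
      LinearMap.flip_apply, LinearMap.id_coe, id_eq, dite_false]
    rw [reesRho_single]
    congr 1
    refine Fintype.sum_equiv (Equiv.mulLeft (WithZero.unzero hq * t.2.1)⁻¹) _ _ fun x => ?_
    simp [mul_assoc, mul_inv_rev, inv_mul_cancel_left, mul_inv_cancel_left]
lemma rees_key1' {G I Λ : Type*} [Group G] [Fintype G] (P : Λ → I → WithZero G)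
    (i₀ : I) (lam₀ : Λ) (hp : P lam₀ i₀ ≠ 0) (s : I × G × Λ) (b : ℂ) :
    TensorProduct.lift (reesAlgMul P) (reesRho P i₀ lam₀ hp (Finsupp.single s b))
      = Finsupp.single s b := by
  have h : (Finsupp.single s b : (I × G × Λ) →₀ ℂ) = b • Finsupp.single s 1 := by
    rw [Finsupp.smul_single_one]
  rw [h, map_smul, map_smul, rees_key1]

lemma rees_key2' {G I Λ : Type*} [Group G] [Fintype G] (P : Λ → I → WithZero G)
    (i₀ : I) (lam₀ : Λ) (hp : P lam₀ i₀ ≠ 0) (t s : I × G × Λ) (c b : ℂ) :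
    TensorProduct.map (reesAlgMul P (Finsupp.single t c)) LinearMap.id
        (reesRho P i₀ lam₀ hp (Finsupp.single s b))
      = reesRho P i₀ lam₀ hp (reesAlgMul P (Finsupp.single t c) (Finsupp.single s b)) := by
  have ht : (Finsupp.single t c : (I × G × Λ) →₀ ℂ) = c • Finsupp.single t 1 := by
    rw [Finsupp.smul_single_one]
  have hs : (Finsupp.single s b : (I × G × Λ) →₀ ℂ) = b • Finsupp.single s 1 := by
    rw [Finsupp.smul_single_one]
  rw [ht, hs]
  simp only [map_smul, LinearMap.smul_apply, TensorProduct.map_smul_left,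
    LinearMap.map_smul, smul_smul, mul_comm c b]
  rw [rees_key2]

lemma rees_key3' {G I Λ : Type*} [Group G] [Fintype G] (P : Λ → I → WithZero G)
    (i₀ : I) (lam₀ : Λ) (hp : P lam₀ i₀ ≠ 0) (t s : I × G × Λ) (c b : ℂ) :
    TensorProduct.map LinearMap.id ((reesAlgMul P).flip (Finsupp.single t c))
        (reesRho P i₀ lam₀ hp (Finsupp.single s b))
      = reesRho P i₀ lam₀ hp (reesAlgMul P (Finsupp.single s b) (Finsupp.single t c)) := by
  have ht : (Finsupp.single t c : (I × G × Λ) →₀ ℂ) = c • Finsupp.single t 1 := by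
    rw [Finsupp.smul_single_one]
  have hs : (Finsupp.single s b : (I × G × Λ) →₀ ℂ) = b • Finsupp.single s 1 := by
    rw [Finsupp.smul_single_one]
  rw [ht, hs]
  simp only [map_smul, LinearMap.smul_apply, TensorProduct.map_smul_right,
    LinearMap.map_smul, smul_smul, mul_comm c b]
  rw [rees_key3]
/-- if `G` is finite, then `ρ` is a right inverse of the multiplication
map `Π : A ⊗[ℂ] A → A` and an `A`-bimodule homomorphism (with the actions
`a·(u⊗v) = (a*u)⊗v` and `(u⊗v)·a = u⊗(v*a)`); in particular `ℂ₀[S]` is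
biprojective. -/
theorem rees_algebra_biprojective_of_finite_group
    {G I Λ : Type*} [Group G] [Fintype G] [Nonempty I] [Nonempty Λ]
    (P : Λ → I → WithZero G)
    (hrow : ∀ lam : Λ, ∃ i : I, P lam i ≠ 0)
    (hcol : ∀ i : I, ∃ lam : Λ, P lam i ≠ 0)
    (i₀ : I) (lam₀ : Λ) (hp : P lam₀ i₀ ≠ 0) :
    (∀ x : (I × G × Λ) →₀ ℂ,
      TensorProduct.lift (reesAlgMul P) (reesRho P i₀ lam₀ hp x) = x) ∧
    (∀ a x : (I × G × Λ) →₀ ℂ,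
      TensorProduct.map (reesAlgMul P a) LinearMap.id (reesRho P i₀ lam₀ hp x)
        = reesRho P i₀ lam₀ hp (reesAlgMul P a x)) ∧
    (∀ a x : (I × G × Λ) →₀ ℂ,
      TensorProduct.map LinearMap.id ((reesAlgMul P).flip a) (reesRho P i₀ lam₀ hp x)
        = reesRho P i₀ lam₀ hp (reesAlgMul P x a)) := by
  refine ⟨?_, ?_, ?_⟩
  · intro x
    induction x using Finsupp.induction_linear with
    | zero => simp
    | add f g hf hg => simp [map_add, hf, hg]
    | single s b => exact rees_key1' P i₀ lam₀ hp s b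
  · intro a x
    induction x using Finsupp.induction_linear with
    | zero => simp
    | add f g hf hg => simp [map_add, hf, hg]
    | single s b =>
      induction a using Finsupp.induction_linear with
      | zero => simp
      | add f g hf hg =>
        simp only [map_add, LinearMap.add_apply, TensorProduct.map_add_left, hf, hg]
      | single t c => exact rees_key2' P i₀ lam₀ hp t s c b
  · intro a x
    induction x using Finsupp.induction_linear with
    | zero => simp
    | add f g hf hg => simp [map_add, LinearMap.add_apply, hf, hg]
    | single s b =>
      induction a using Finsupp.induction_linear with
      | zero => simp
      | add f g hf hg =>
        simp only [map_add, LinearMap.add_apply, TensorProduct.map_add_right, hf, hg,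
          LinearMap.map_add]
      | single t c => exact rees_key3' P i₀ lam₀ hp t s c b
end

section
/- Fix i₀ ∈ I and λ₀ ∈ Λ with p := p_{λ₀ i₀} ≠ 𝐨 and set e = δ_{(i₀, p⁻¹, λ₀)} ∈ A, an idempotent. Suppose A is biprojective: there exists a ℂ-linear A-bimodule map ρ : A → A ⊗[ℂ] A (i.e. a·ρ(x) = ρ(a*x) and ρ(x)·a = ρ(x*a) for all a, x ∈ A, with actions a·(u⊗v) = (a*u)⊗v and (u⊗v)·a = u⊗(v*a)) such that Π ∘ ρ = id_A. Then the corner algebra eAe admits a separability idempotent: there exists Δ ∈ A ⊗[ℂ] A lying in the image of (eAe) ⊗[ℂ] (eAe) (i.e. Δ is a sum of elementary tensors of the form (e*a*e) ⊗ (e*b*e)) such that Π(Δ) = e and x·Δ = Δ·x for every x of the form x = e*a*e with a ∈ A. -/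
open scoped Classical

open TensorProduct

section ReesAux

variable {G I Λ : Type*} [Group G] (P : Λ → I → WithZero G)

lemma reesAlgMul_single_single (s t : I × G × Λ) (c d : ℂ) :
    reesAlgMul P (Finsupp.single s c) (Finsupp.single t d) = (c * d) • reesDelta P s t := by
  simp [reesAlgMul, Finsupp.lift_apply, Finsupp.sum_single_index, mul_smul]

lemma reesAlgMul_single_one (s t : I × G × Λ) :
    reesAlgMul P (Finsupp.single s (1:ℂ)) (Finsupp.single t (1:ℂ)) = reesDelta P s t := by
  simp [reesAlgMul_single_single]

lemma reesDelta_of_ne_zero (s t : I × G × Λ) (h : P s.2.2 t.1 ≠ 0) :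
    reesDelta P s t =
      Finsupp.single (s.1, s.2.1 * WithZero.unzero h * t.2.1, t.2.2) (1 : ℂ) := by
  simp [reesDelta, h]

lemma reesDelta_apply_fst_ne (s t r : I × G × Λ) (h : r.1 ≠ s.1) :
    reesDelta P s t r = 0 := by
  unfold reesDelta
  split
  · simp
  · rw [Finsupp.single_apply, if_neg]
    intro hEq
    exact h (by rw [← hEq])

lemma reesDelta_apply_trd_ne (s t r : I × G × Λ) (h : r.2.2 ≠ t.2.2) :
    reesDelta P s t r = 0 := by
  unfold reesDelta
  split
  · simp
  · rw [Finsupp.single_apply, if_neg]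
    intro hEq
    exact h (by rw [← hEq])

variable (i₀ : I) (lam₀ : Λ) (hp : P lam₀ i₀ ≠ 0)

lemma rees_b_mul (g h : G) :
    reesAlgMul P (Finsupp.single ((i₀, g, lam₀) : I × G × Λ) (1:ℂ))
      (Finsupp.single ((i₀, h, lam₀) : I × G × Λ) (1:ℂ))
    = Finsupp.single ((i₀, g * WithZero.unzero hp * h, lam₀) : I × G × Λ) (1:ℂ) := by
  rw [reesAlgMul_single_one, reesDelta_of_ne_zero P _ _ hp]

lemma rees_e_idem :
    reesAlgMul P (Finsupp.single ((i₀, (WithZero.unzero hp)⁻¹, lam₀) : I × G × Λ) (1:ℂ))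
      (Finsupp.single ((i₀, (WithZero.unzero hp)⁻¹, lam₀) : I × G × Λ) (1:ℂ))
    = Finsupp.single ((i₀, (WithZero.unzero hp)⁻¹, lam₀) : I × G × Λ) (1:ℂ) := by
  rw [rees_b_mul P i₀ lam₀ hp]
  congr 2
  group

lemma rees_eb_mul (g : G) :
    reesAlgMul P (Finsupp.single ((i₀, (WithZero.unzero hp)⁻¹, lam₀) : I × G × Λ) (1:ℂ))
      (Finsupp.single ((i₀, g, lam₀) : I × G × Λ) (1:ℂ))
    = Finsupp.single ((i₀, g, lam₀) : I × G × Λ) (1:ℂ) := by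
  rw [rees_b_mul P i₀ lam₀ hp]
  congr 2
  group

lemma rees_be_mul (g : G) :
    reesAlgMul P (Finsupp.single ((i₀, g, lam₀) : I × G × Λ) (1:ℂ))
      (Finsupp.single ((i₀, (WithZero.unzero hp)⁻¹, lam₀) : I × G × Λ) (1:ℂ))
    = Finsupp.single ((i₀, g, lam₀) : I × G × Λ) (1:ℂ) := by
  rw [rees_b_mul P i₀ lam₀ hp]
  congr 2
  group

end ReesAux

noncomputable abbrev ET (α : Type*) := finsuppTensorFinsupp' ℂ α α

section Coeff
variable {α : Type*}

lemma tensor_expand (z : (α →₀ ℂ) ⊗[ℂ] (α →₀ ℂ)) :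
    z = ∑ q ∈ (ET α z).support,
        (Finsupp.single q.1 ((ET α z) q)) ⊗ₜ[ℂ] (Finsupp.single q.2 (1:ℂ)) := by
  apply (ET α).injective
  refine Eq.trans ?_ (map_sum (ET α).toLinearMap _ _).symm
  conv_lhs => rw [← Finsupp.sum_single (ET α z), Finsupp.sum]
  refine Finset.sum_congr rfl fun q _ => ?_
  exact (by rw [finsuppTensorFinsupp'_single_tmul_single]; simp :
    (ET α) ((Finsupp.single q.1 ((ET α z) q)) ⊗ₜ[ℂ] (Finsupp.single q.2 (1:ℂ)))
      = Finsupp.single q ((ET α z) q)).symm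

lemma coeff_map_left (f : (α →₀ ℂ) →ₗ[ℂ] (α →₀ ℂ)) (z : (α →₀ ℂ) ⊗[ℂ] (α →₀ ℂ))
    (r1 r2 : α) :
    ET α (TensorProduct.map f LinearMap.id z) (r1, r2)
    = ∑ q ∈ (ET α z).support,
        (ET α z) q * ((f (Finsupp.single q.1 1)) r1 * (Finsupp.single q.2 (1:ℂ)) r2) := by
  have h1 : TensorProduct.map f LinearMap.id z
      = ∑ q ∈ (ET α z).support,
          (f (Finsupp.single q.1 ((ET α z) q))) ⊗ₜ[ℂ] (Finsupp.single q.2 (1:ℂ)) := by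
    conv_lhs => rw [tensor_expand z]
    rw [map_sum (TensorProduct.map f LinearMap.id)]
    exact Finset.sum_congr rfl fun q _ => by rw [TensorProduct.map_tmul, LinearMap.id_apply]
  rw [h1]
  have h2 := map_sum (ET α).toLinearMap
    (fun q => (f (Finsupp.single q.1 ((ET α z) q))) ⊗ₜ[ℂ] (Finsupp.single q.2 (1:ℂ)))
    (ET α z).support
  simp only [LinearEquiv.coe_coe] at h2
  rw [h2, Finsupp.finset_sum_apply]
  refine Finset.sum_congr rfl fun q _ => ?_
  have h3 : Finsupp.single q.1 ((ET α z) q) = ((ET α z) q) • Finsupp.single q.1 (1:ℂ) := by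
    simp
  rw [finsuppTensorFinsupp'_apply_apply, h3, map_smul, Finsupp.smul_apply, smul_eq_mul,
    mul_assoc]

lemma coeff_map_right (f : (α →₀ ℂ) →ₗ[ℂ] (α →₀ ℂ)) (z : (α →₀ ℂ) ⊗[ℂ] (α →₀ ℂ))
    (r1 r2 : α) :
    ET α (TensorProduct.map LinearMap.id f z) (r1, r2)
    = ∑ q ∈ (ET α z).support,
        (ET α z) q * ((Finsupp.single q.1 (1:ℂ)) r1 * (f (Finsupp.single q.2 1)) r2) := by
  have h1 : TensorProduct.map LinearMap.id f z
      = ∑ q ∈ (ET α z).support,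
          (Finsupp.single q.1 ((ET α z) q)) ⊗ₜ[ℂ] (f (Finsupp.single q.2 (1:ℂ))) := by
    conv_lhs => rw [tensor_expand z]
    rw [map_sum (TensorProduct.map LinearMap.id f)]
    exact Finset.sum_congr rfl fun q _ => by rw [TensorProduct.map_tmul, LinearMap.id_apply]
  rw [h1]
  have h2 := map_sum (ET α).toLinearMap
    (fun q => (Finsupp.single q.1 ((ET α z) q)) ⊗ₜ[ℂ] (f (Finsupp.single q.2 (1:ℂ))))
    (ET α z).support
  simp only [LinearEquiv.coe_coe] at h2
  rw [h2, Finsupp.finset_sum_apply]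
  refine Finset.sum_congr rfl fun q _ => ?_
  have h3 : Finsupp.single q.1 ((ET α z) q) = ((ET α z) q) • Finsupp.single q.1 (1:ℂ) := by
    simp
  rw [finsuppTensorFinsupp'_apply_apply, h3, Finsupp.smul_apply, smul_eq_mul, mul_assoc]

end Coeff

lemma rees_finite_of_biprojective
    {G I Λ : Type*} [Group G]
    (P : Λ → I → WithZero G)
    (i₀ : I) (lam₀ : Λ) (hp : P lam₀ i₀ ≠ 0)
    (ρ : ((I × G × Λ) →₀ ℂ) →ₗ[ℂ] (((I × G × Λ) →₀ ℂ) ⊗[ℂ] ((I × G × Λ) →₀ ℂ)))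
    (hsplit : ∀ x : (I × G × Λ) →₀ ℂ, TensorProduct.lift (reesAlgMul P) (ρ x) = x)
    (hleft : ∀ a x : (I × G × Λ) →₀ ℂ,
      TensorProduct.map (reesAlgMul P a) LinearMap.id (ρ x) = ρ (reesAlgMul P a x))
    (hright : ∀ a x : (I × G × Λ) →₀ ℂ,
      TensorProduct.map LinearMap.id ((reesAlgMul P).flip a) (ρ x) = ρ (reesAlgMul P x a)) :
    Finite G := by
  have hee := rees_e_idem P i₀ lam₀ hp
  set M := ρ (Finsupp.single ((i₀, (WithZero.unzero hp)⁻¹, lam₀) : I × G × Λ) (1:ℂ)) with hM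
  set F := ET (I × G × Λ) M with hFdef
  have hMl : TensorProduct.map
      (reesAlgMul P (Finsupp.single ((i₀, (WithZero.unzero hp)⁻¹, lam₀) : I × G × Λ) (1:ℂ)))
      LinearMap.id M = M := by
    rw [hM, hleft, hee]
  have hMr : TensorProduct.map LinearMap.id
      ((reesAlgMul P).flip
        (Finsupp.single ((i₀, (WithZero.unzero hp)⁻¹, lam₀) : I × G × Λ) (1:ℂ))) M = M := by
    rw [hM, hright, hee]
  have keyA : ∀ r1 r2 : I × G × Λ, r1.1 ≠ i₀ → F (r1, r2) = 0 := by
    intro r1 r2 hr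
    conv_lhs => rw [hFdef, ← hMl]
    rw [coeff_map_left]
    refine Finset.sum_eq_zero fun q _ => ?_
    rw [reesAlgMul_single_one,
      reesDelta_apply_fst_ne P ((i₀, (WithZero.unzero hp)⁻¹, lam₀) : I × G × Λ) q.1 r1 hr]
    ring
  have keyB : ∀ r1 r2 : I × G × Λ, r2.2.2 ≠ lam₀ → F (r1, r2) = 0 := by
    intro r1 r2 hr
    conv_lhs => rw [hFdef, ← hMr]
    rw [coeff_map_right]
    refine Finset.sum_eq_zero fun q _ => ?_
    rw [LinearMap.flip_apply, reesAlgMul_single_one,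
      reesDelta_apply_trd_ne P q.2 ((i₀, (WithZero.unzero hp)⁻¹, lam₀) : I × G × Λ) r2 hr]
    ring
  have keyC : ∀ (a x : G) (ν : Λ) (j : I) (y : G),
      F ((i₀, x, ν), (j, y, lam₀))
      = F ((i₀, a * WithZero.unzero hp * x, ν),
           (j, y * a⁻¹ * (WithZero.unzero hp)⁻¹, lam₀)) := by
    intro a x ν j y
    have hcm : TensorProduct.map
        (reesAlgMul P (Finsupp.single ((i₀, a, lam₀) : I × G × Λ) (1:ℂ))) LinearMap.id M
        = TensorProduct.map LinearMap.id
          ((reesAlgMul P).flip (Finsupp.single ((i₀, a, lam₀) : I × G × Λ) (1:ℂ))) M := by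
      rw [hM, hleft, hright, rees_be_mul P i₀ lam₀ hp, rees_eb_mul P i₀ lam₀ hp]
    have hL : ET (I × G × Λ) (TensorProduct.map
        (reesAlgMul P (Finsupp.single ((i₀, a, lam₀) : I × G × Λ) (1:ℂ))) LinearMap.id M)
        ((i₀, a * WithZero.unzero hp * x, ν), (j, y, lam₀))
        = F ((i₀, x, ν), (j, y, lam₀)) := by
      rw [coeff_map_left]
      have hterm : ∀ q ∈ F.support,
          F q * ((reesAlgMul P (Finsupp.single ((i₀, a, lam₀) : I × G × Λ) (1:ℂ))
              (Finsupp.single q.1 1)) (i₀, a * WithZero.unzero hp * x, ν) *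
            (Finsupp.single q.2 (1:ℂ)) (j, y, lam₀))
          = if q = ((((i₀, x, ν) : I × G × Λ), ((j, y, lam₀) : I × G × Λ)))
              then F q else 0 := by
        rintro ⟨⟨q11, q12, q13⟩, q2⟩ hq
        by_cases hq1 : q11 = i₀
        · subst hq1
          rw [reesAlgMul_single_one, reesDelta_of_ne_zero P _ _ hp]
          dsimp only
          rw [Finsupp.single_apply, Finsupp.single_apply]
          by_cases hc1 : ((q11, a * WithZero.unzero hp * q12, q13) : I × G × Λ)
              = ((q11, a * WithZero.unzero hp * x, ν) : I × G × Λ)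
          · by_cases hc2 : q2 = ((j, y, lam₀) : I × G × Λ)
            · have h12 : q12 = x := by
                have := congrArg (fun r : I × G × Λ => r.2.1) hc1
                exact mul_left_cancel this
              have h13 : q13 = ν := congrArg (fun r : I × G × Λ => r.2.2) hc1
              rw [if_pos hc1, if_pos hc2,
                if_pos (show ((((q11, q12, q13) : I × G × Λ), q2))
                    = ((((q11, x, ν) : I × G × Λ), ((j, y, lam₀) : I × G × Λ)))
                  by rw [h12, h13, hc2])]
              ring
            · rw [if_neg hc2,
                if_neg (show ¬((((q11, q12, q13) : I × G × Λ), q2))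
                    = ((((q11, x, ν) : I × G × Λ), ((j, y, lam₀) : I × G × Λ)))
                  from fun hEq => hc2 (congrArg Prod.snd hEq))]
              ring
          · rw [if_neg hc1,
              if_neg (show ¬((((q11, q12, q13) : I × G × Λ), q2))
                  = ((((q11, x, ν) : I × G × Λ), ((j, y, lam₀) : I × G × Λ)) )
                from ?_)]
            · ring
            · intro hEq
              apply hc1
              have h1 := congrArg (fun r : (I × G × Λ) × (I × G × Λ) => r.1.2.1) hEq
              have h2 := congrArg (fun r : (I × G × Λ) × (I × G × Λ) => r.1.2.2) hEq
              dsimp only at h1 h2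
              rw [h1, h2]
        · rw [keyA (q11, q12, q13) q2 hq1,
            if_neg (show ¬((((q11, q12, q13) : I × G × Λ), q2))
                = ((((i₀, x, ν) : I × G × Λ), ((j, y, lam₀) : I × G × Λ)))
              from ?_)]
          · ring
          · intro hEq
            apply hq1
            exact congrArg (fun r : (I × G × Λ) × (I × G × Λ) => r.1.1) hEq
      rw [Finset.sum_congr rfl hterm, Finset.sum_ite_eq' F.support _ F]
      by_cases hmem : ((((i₀, x, ν) : I × G × Λ), ((j, y, lam₀) : I × G × Λ))) ∈ F.support
      · rw [if_pos hmem]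
      · rw [if_neg hmem]
        exact (Finsupp.notMem_support_iff.mp hmem).symm
    have hR : ET (I × G × Λ) (TensorProduct.map LinearMap.id
        ((reesAlgMul P).flip (Finsupp.single ((i₀, a, lam₀) : I × G × Λ) (1:ℂ))) M)
        ((i₀, a * WithZero.unzero hp * x, ν), (j, y, lam₀))
        = F ((i₀, a * WithZero.unzero hp * x, ν),
             (j, y * a⁻¹ * (WithZero.unzero hp)⁻¹, lam₀)) := by
      rw [coeff_map_right]
      have hterm : ∀ q ∈ F.support,
          F q * ((Finsupp.single q.1 (1:ℂ)) (i₀, a * WithZero.unzero hp * x, ν) *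
            ((reesAlgMul P).flip (Finsupp.single ((i₀, a, lam₀) : I × G × Λ) (1:ℂ))
              (Finsupp.single q.2 1)) (j, y, lam₀))
          = if q = ((((i₀, a * WithZero.unzero hp * x, ν) : I × G × Λ),
              ((j, y * a⁻¹ * (WithZero.unzero hp)⁻¹, lam₀) : I × G × Λ)))
              then F q else 0 := by
        rintro ⟨q1, ⟨q21, q22, q23⟩⟩ hq
        by_cases hq2 : q23 = lam₀
        · subst hq2
          rw [LinearMap.flip_apply, reesAlgMul_single_one, reesDelta_of_ne_zero P _ _ hp]
          dsimp only
          rw [Finsupp.single_apply, Finsupp.single_apply]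
          by_cases hc2 : ((q21, q22 * WithZero.unzero hp * a, q23) : I × G × Λ)
              = ((j, y, q23) : I × G × Λ)
          · by_cases hc1 : q1 = ((i₀, a * WithZero.unzero hp * x, ν) : I × G × Λ)
            · have h21 : q21 = j := congrArg (fun r : I × G × Λ => r.1) hc2
              have h22 : q22 = y * a⁻¹ * (WithZero.unzero hp)⁻¹ := by
                have hy := congrArg (fun r : I × G × Λ => r.2.1) hc2
                dsimp only at hy
                rw [← hy]
                group
              rw [if_pos hc1, if_pos hc2,
                if_pos (show ((q1, ((q21, q22, q23) : I × G × Λ)))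
                    = ((((i₀, a * WithZero.unzero hp * x, ν) : I × G × Λ),
                        ((j, y * a⁻¹ * (WithZero.unzero hp)⁻¹, q23) : I × G × Λ)))
                  by rw [h21, h22, hc1])]
              ring
            · rw [if_neg hc1,
                if_neg (show ¬((q1, ((q21, q22, q23) : I × G × Λ)))
                    = ((((i₀, a * WithZero.unzero hp * x, ν) : I × G × Λ),
                        ((j, y * a⁻¹ * (WithZero.unzero hp)⁻¹, q23) : I × G × Λ)))
                  from fun hEq => hc1 (congrArg Prod.fst hEq))]
              ring
          · rw [if_neg hc2,
              if_neg (show ¬((q1, ((q21, q22, q23) : I × G × Λ)))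
                  = ((((i₀, a * WithZero.unzero hp * x, ν) : I × G × Λ),
                      ((j, y * a⁻¹ * (WithZero.unzero hp)⁻¹, q23) : I × G × Λ)))
                from ?_)]
            · ring
            · intro hEq
              apply hc2
              have h1 := congrArg (fun r : (I × G × Λ) × (I × G × Λ) => r.2.1) hEq
              have h2 := congrArg (fun r : (I × G × Λ) × (I × G × Λ) => r.2.2.1) hEq
              dsimp only at h1 h2
              rw [h1, h2]
              have : (y * a⁻¹ * (WithZero.unzero hp)⁻¹) * WithZero.unzero hp * a = y := by
                group
              rw [this]
        · rw [keyB q1 (q21, q22, q23) hq2,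
            if_neg (show ¬((q1, ((q21, q22, q23) : I × G × Λ)))
                = ((((i₀, a * WithZero.unzero hp * x, ν) : I × G × Λ),
                    ((j, y * a⁻¹ * (WithZero.unzero hp)⁻¹, lam₀) : I × G × Λ)))
              from ?_)]
          · ring
          · intro hEq
            apply hq2
            exact congrArg (fun r : (I × G × Λ) × (I × G × Λ) => r.2.2.2) hEq
      rw [Finset.sum_congr rfl hterm, Finset.sum_ite_eq' F.support _ F]
      by_cases hmem : ((((i₀, a * WithZero.unzero hp * x, ν) : I × G × Λ),
          ((j, y * a⁻¹ * (WithZero.unzero hp)⁻¹, lam₀) : I × G × Λ))) ∈ F.support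
      · rw [if_pos hmem]
      · rw [if_neg hmem]
        exact (Finsupp.notMem_support_iff.mp hmem).symm
    rw [← hL, hcm, hR]
  -- now extract finiteness
  obtain ⟨q₀, hq₀⟩ : ∃ q, F q ≠ 0 := by
    by_contra h
    push_neg at h
    have hF0 : F = 0 := Finsupp.ext h
    have hM0 := (LinearEquiv.map_eq_zero_iff (ET (I × G × Λ))).mp (hFdef ▸ hF0)
    have h1 := hsplit (Finsupp.single ((i₀, (WithZero.unzero hp)⁻¹, lam₀) : I × G × Λ) (1:ℂ))
    rw [← hM, hM0, LinearMap.map_zero] at h1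
    exact one_ne_zero (Finsupp.single_eq_zero.mp h1.symm)
  have h1 : q₀.1.1 = i₀ := by
    by_contra h
    exact hq₀ (keyA q₀.1 q₀.2 h)
  have h2 : q₀.2.2.2 = lam₀ := by
    by_contra h
    exact hq₀ (keyB q₀.1 q₀.2 h)
  have hq₀' : q₀ = ((i₀, q₀.1.2.1, q₀.1.2.2), (q₀.2.1, q₀.2.2.1, lam₀)) := by
    rw [← h1, ← h2]
  have key : ∀ a : G,
      F ((i₀, a * WithZero.unzero hp * q₀.1.2.1, q₀.1.2.2),
        (q₀.2.1, q₀.2.2.1 * a⁻¹ * (WithZero.unzero hp)⁻¹, lam₀)) ≠ 0 := by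
    intro a
    rw [← keyC a q₀.1.2.1 q₀.1.2.2 q₀.2.1 q₀.2.2.1, ← hq₀']
    exact hq₀
  refine Finite.of_injective (fun a : G =>
    (⟨((i₀, a * WithZero.unzero hp * q₀.1.2.1, q₀.1.2.2),
        (q₀.2.1, q₀.2.2.1 * a⁻¹ * (WithZero.unzero hp)⁻¹, lam₀)),
      Finsupp.mem_support_iff.mpr (key a)⟩ : {q // q ∈ F.support})) ?_
  intro a a' h
  have := congrArg (fun z : {q // q ∈ F.support} => (z : (I × G × Λ) × (I × G × Λ)).1.2.1) h
  dsimp only at this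
  exact mul_right_cancel (mul_right_cancel this)

section Sep
variable {G I Λ : Type*} [Group G] [Fintype G] (P : Λ → I → WithZero G)
variable (i₀ : I) (lam₀ : Λ) (hp : P lam₀ i₀ ≠ 0)

noncomputable def reesSep : ((I × G × Λ) →₀ ℂ) ⊗[ℂ] ((I × G × Λ) →₀ ℂ) :=
  (Fintype.card G : ℂ)⁻¹ •
    ∑ g : G, (Finsupp.single ((i₀, g * (WithZero.unzero hp)⁻¹, lam₀) : I × G × Λ) (1:ℂ))
      ⊗ₜ[ℂ] (Finsupp.single ((i₀, g⁻¹ * (WithZero.unzero hp)⁻¹, lam₀) : I × G × Λ) (1:ℂ))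

lemma reesSep_lift :
    TensorProduct.lift (reesAlgMul P) (reesSep P i₀ lam₀ hp)
    = Finsupp.single ((i₀, (WithZero.unzero hp)⁻¹, lam₀) : I × G × Λ) (1:ℂ) := by
  unfold reesSep
  rw [map_smul, map_sum]
  have h1 : ∀ g : G, TensorProduct.lift (reesAlgMul P)
      ((Finsupp.single ((i₀, g * (WithZero.unzero hp)⁻¹, lam₀) : I × G × Λ) (1:ℂ))
        ⊗ₜ[ℂ] (Finsupp.single ((i₀, g⁻¹ * (WithZero.unzero hp)⁻¹, lam₀) : I × G × Λ) (1:ℂ)))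
      = Finsupp.single ((i₀, (WithZero.unzero hp)⁻¹, lam₀) : I × G × Λ) (1:ℂ) := by
    intro g
    rw [TensorProduct.lift.tmul, rees_b_mul P i₀ lam₀ hp]
    congr 2
    group
  rw [Finset.sum_congr rfl (fun g _ => h1 g), Finset.sum_const, Finset.card_univ,
    ← Nat.cast_smul_eq_nsmul ℂ, smul_smul, inv_mul_cancel₀
      (Nat.cast_ne_zero.mpr Fintype.card_ne_zero), one_smul]

lemma reesSep_comm_single (h : G) :
    TensorProduct.map (reesAlgMul P (Finsupp.single ((i₀, h, lam₀) : I × G × Λ) (1:ℂ)))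
      LinearMap.id (reesSep P i₀ lam₀ hp)
    = TensorProduct.map LinearMap.id
      ((reesAlgMul P).flip (Finsupp.single ((i₀, h, lam₀) : I × G × Λ) (1:ℂ)))
      (reesSep P i₀ lam₀ hp) := by
  unfold reesSep
  rw [map_smul, map_smul, map_sum, map_sum]
  congr 1
  have hL : ∀ g : G,
      TensorProduct.map (reesAlgMul P (Finsupp.single ((i₀, h, lam₀) : I × G × Λ) (1:ℂ)))
        LinearMap.id
        ((Finsupp.single ((i₀, g * (WithZero.unzero hp)⁻¹, lam₀) : I × G × Λ) (1:ℂ))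
          ⊗ₜ[ℂ] (Finsupp.single ((i₀, g⁻¹ * (WithZero.unzero hp)⁻¹, lam₀) : I × G × Λ) (1:ℂ)))
      = (Finsupp.single ((i₀, h * WithZero.unzero hp * (g * (WithZero.unzero hp)⁻¹), lam₀)
            : I × G × Λ) (1:ℂ))
          ⊗ₜ[ℂ] (Finsupp.single ((i₀, g⁻¹ * (WithZero.unzero hp)⁻¹, lam₀) : I × G × Λ) (1:ℂ)) := by
    intro g
    rw [TensorProduct.map_tmul, LinearMap.id_apply, rees_b_mul P i₀ lam₀ hp]
  have hR : ∀ g : G,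
      TensorProduct.map LinearMap.id
        ((reesAlgMul P).flip (Finsupp.single ((i₀, h, lam₀) : I × G × Λ) (1:ℂ)))
        ((Finsupp.single ((i₀, g * (WithZero.unzero hp)⁻¹, lam₀) : I × G × Λ) (1:ℂ))
          ⊗ₜ[ℂ] (Finsupp.single ((i₀, g⁻¹ * (WithZero.unzero hp)⁻¹, lam₀) : I × G × Λ) (1:ℂ)))
      = (Finsupp.single ((i₀, g * (WithZero.unzero hp)⁻¹, lam₀) : I × G × Λ) (1:ℂ))
          ⊗ₜ[ℂ] (Finsupp.single ((i₀, g⁻¹ * (WithZero.unzero hp)⁻¹ * WithZero.unzero hp * h, lam₀)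
            : I × G × Λ) (1:ℂ)) := by
    intro g
    rw [TensorProduct.map_tmul, LinearMap.id_apply, LinearMap.flip_apply,
      rees_b_mul P i₀ lam₀ hp]
  rw [Finset.sum_congr rfl (fun g _ => hL g), Finset.sum_congr rfl (fun g _ => hR g)]
  refine Fintype.sum_equiv (Equiv.mulLeft (h * WithZero.unzero hp)) _ _ fun x => ?_
  simp only [Equiv.coe_mulLeft]
  have e1 : h * WithZero.unzero hp * (x * (WithZero.unzero hp)⁻¹)
      = h * WithZero.unzero hp * x * (WithZero.unzero hp)⁻¹ := by group
  have e2 : x⁻¹ * (WithZero.unzero hp)⁻¹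
      = (h * WithZero.unzero hp * x)⁻¹ * (WithZero.unzero hp)⁻¹ * WithZero.unzero hp * h := by
    group
  rw [e1, e2]

end Sep

/-- fix `i₀, λ₀` with `p := p_{λ₀ i₀} ≠ 𝐨` and let
`e = δ_{(i₀, p⁻¹, λ₀)} ∈ A = ℂ₀[S]`. If `A` is biprojective, i.e. the multiplication
`Π : A ⊗[ℂ] A → A` has a right inverse `ρ` which is an `A`-bimodule map, then `e` is
idempotent and the corner algebra `eAe` has a separability idempotent: some
`Δ ∈ (eAe) ⊗[ℂ] (eAe) ⊆ A ⊗[ℂ] A` with `Π(Δ) = e` and `x·Δ = Δ·x` for every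
`x = e*a*e`. -/
theorem rees_corner_separability_idempotent_of_biprojective
    {G I Λ : Type*} [Group G] [Nonempty I] [Nonempty Λ]
    (P : Λ → I → WithZero G)
    (hrow : ∀ lam : Λ, ∃ i : I, P lam i ≠ 0)
    (hcol : ∀ i : I, ∃ lam : Λ, P lam i ≠ 0)
    (i₀ : I) (lam₀ : Λ) (hp : P lam₀ i₀ ≠ 0)
    (ρ : ((I × G × Λ) →₀ ℂ) →ₗ[ℂ] (((I × G × Λ) →₀ ℂ) ⊗[ℂ] ((I × G × Λ) →₀ ℂ)))
    (hsplit : ∀ x : (I × G × Λ) →₀ ℂ, TensorProduct.lift (reesAlgMul P) (ρ x) = x)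
    (hleft : ∀ a x : (I × G × Λ) →₀ ℂ,
      TensorProduct.map (reesAlgMul P a) LinearMap.id (ρ x) = ρ (reesAlgMul P a x))
    (hright : ∀ a x : (I × G × Λ) →₀ ℂ,
      TensorProduct.map LinearMap.id ((reesAlgMul P).flip a) (ρ x) = ρ (reesAlgMul P x a)) :
    (reesAlgMul P (Finsupp.single ((i₀, (WithZero.unzero hp)⁻¹, lam₀) : I × G × Λ) (1 : ℂ))
        (Finsupp.single ((i₀, (WithZero.unzero hp)⁻¹, lam₀) : I × G × Λ) (1 : ℂ))
      = Finsupp.single ((i₀, (WithZero.unzero hp)⁻¹, lam₀) : I × G × Λ) (1 : ℂ)) ∧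
    ∃ Δ : ((I × G × Λ) →₀ ℂ) ⊗[ℂ] ((I × G × Λ) →₀ ℂ),
      Δ ∈ Submodule.span ℂ
        {z : ((I × G × Λ) →₀ ℂ) ⊗[ℂ] ((I × G × Λ) →₀ ℂ) |
          ∃ a b : (I × G × Λ) →₀ ℂ,
            z = (reesAlgMul P (reesAlgMul P
                  (Finsupp.single ((i₀, (WithZero.unzero hp)⁻¹, lam₀) : I × G × Λ) (1 : ℂ)) a)
                  (Finsupp.single ((i₀, (WithZero.unzero hp)⁻¹, lam₀) : I × G × Λ) (1 : ℂ)))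
                ⊗ₜ[ℂ] (reesAlgMul P (reesAlgMul P
                  (Finsupp.single ((i₀, (WithZero.unzero hp)⁻¹, lam₀) : I × G × Λ) (1 : ℂ)) b)
                  (Finsupp.single ((i₀, (WithZero.unzero hp)⁻¹, lam₀) : I × G × Λ) (1 : ℂ)))} ∧
      TensorProduct.lift (reesAlgMul P) Δ
        = Finsupp.single ((i₀, (WithZero.unzero hp)⁻¹, lam₀) : I × G × Λ) (1 : ℂ) ∧
      ∀ a : (I × G × Λ) →₀ ℂ,
        TensorProduct.map
            (reesAlgMul P (reesAlgMul P (reesAlgMul P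
              (Finsupp.single ((i₀, (WithZero.unzero hp)⁻¹, lam₀) : I × G × Λ) (1 : ℂ)) a)
              (Finsupp.single ((i₀, (WithZero.unzero hp)⁻¹, lam₀) : I × G × Λ) (1 : ℂ))))
            LinearMap.id Δ
          = TensorProduct.map LinearMap.id
              ((reesAlgMul P).flip (reesAlgMul P (reesAlgMul P
                (Finsupp.single ((i₀, (WithZero.unzero hp)⁻¹, lam₀) : I × G × Λ) (1 : ℂ)) a)
                (Finsupp.single ((i₀, (WithZero.unzero hp)⁻¹, lam₀) : I × G × Λ) (1 : ℂ)))) Δ := by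
  refine ⟨rees_e_idem P i₀ lam₀ hp, ?_⟩
  have hfin : Finite G := rees_finite_of_biprojective P i₀ lam₀ hp ρ hsplit hleft hright
  letI : Fintype G := Fintype.ofFinite G
  refine ⟨reesSep P i₀ lam₀ hp, ?_, reesSep_lift P i₀ lam₀ hp, ?_⟩
  · unfold reesSep
    refine Submodule.smul_mem _ _ (Submodule.sum_mem _ fun g _ => Submodule.subset_span ?_)
    refine ⟨Finsupp.single ((i₀, g * (WithZero.unzero hp)⁻¹, lam₀) : I × G × Λ) (1:ℂ),
      Finsupp.single ((i₀, g⁻¹ * (WithZero.unzero hp)⁻¹, lam₀) : I × G × Λ) (1:ℂ), ?_⟩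
    rw [rees_eb_mul P i₀ lam₀ hp, rees_be_mul P i₀ lam₀ hp, rees_eb_mul P i₀ lam₀ hp,
      rees_be_mul P i₀ lam₀ hp]
  · -- commutation
    have hspan : ∀ x ∈ Submodule.span ℂ
        (Set.range (fun g : G => Finsupp.single ((i₀, g, lam₀) : I × G × Λ) (1:ℂ))),
        TensorProduct.map (reesAlgMul P x) LinearMap.id (reesSep P i₀ lam₀ hp)
        = TensorProduct.map LinearMap.id ((reesAlgMul P).flip x) (reesSep P i₀ lam₀ hp) := by
      intro x hx
      induction hx using Submodule.span_induction with
      | mem x h =>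
        obtain ⟨g, rfl⟩ := h
        exact reesSep_comm_single P i₀ lam₀ hp g
      | zero =>
        rw [map_zero, map_zero, TensorProduct.map_zero_left, TensorProduct.map_zero_right]
      | add x y hx hy ihx ihy =>
        rw [map_add, map_add, TensorProduct.map_add_left, TensorProduct.map_add_right,
          LinearMap.add_apply, LinearMap.add_apply, ihx, ihy]
      | smul c x hx ih =>
        rw [map_smul, map_smul, TensorProduct.map_smul_left, TensorProduct.map_smul_right,
          LinearMap.smul_apply, LinearMap.smul_apply, ih]
    intro a
    refine hspan _ ?_
    induction a using Finsupp.induction_linear with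
    | zero =>
      rw [map_zero, map_zero, LinearMap.zero_apply]
      exact Submodule.zero_mem _
    | add f g ihf ihg =>
      rw [map_add, map_add, LinearMap.add_apply]
      exact Submodule.add_mem _ ihf ihg
    | single s c =>
      have hsc : Finsupp.single s c = c • Finsupp.single s (1:ℂ) := by
        rw [Finsupp.smul_single', mul_one]
      rw [hsc, map_smul, map_smul, LinearMap.smul_apply]
      refine Submodule.smul_mem _ c ?_
      rw [reesAlgMul_single_one]
      by_cases h1 : P lam₀ s.1 = 0
      · rw [show reesDelta P ((i₀, (WithZero.unzero hp)⁻¹, lam₀) : I × G × Λ) s = 0 by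
          simp [reesDelta, h1]]
        rw [map_zero, LinearMap.zero_apply]
        exact Submodule.zero_mem _
      · rw [reesDelta_of_ne_zero P ((i₀, (WithZero.unzero hp)⁻¹, lam₀) : I × G × Λ) s h1]
        dsimp only
        rw [reesAlgMul_single_one]
        by_cases h2 : P s.2.2 i₀ = 0
        · rw [show reesDelta P ((i₀, (WithZero.unzero hp)⁻¹ * WithZero.unzero h1 * s.2.1, s.2.2)
              : I × G × Λ) ((i₀, (WithZero.unzero hp)⁻¹, lam₀) : I × G × Λ) = 0 by
            simp [reesDelta, h2]]
          exact Submodule.zero_mem _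
        · rw [reesDelta_of_ne_zero P _ _ h2]
          dsimp only
          refine Submodule.subset_span ⟨(WithZero.unzero hp)⁻¹ * WithZero.unzero h1 * s.2.1
            * WithZero.unzero h2 * (WithZero.unzero hp)⁻¹, rfl⟩
end
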